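/- For every language L over the push-pop alphabet Σ, the two semantic interpretations agree on the canonicalized language: [overline(L)] = [overline(L)]', where overline(L) := poppush(filter(pushpop(L))). -/

import Mathlib

/-- Push-pop StacKAT expressions: regular-expression terms over push/pop of values in `V`. -/
inductive Exp (V : Type) : Type
  | zero : Exp V
  | one : Exp V
  | plus : Exp V → Exp V → Exp V
  | seq : Exp V → Exp V → Exp V
  | star : Exp V → Exp V
  | push : V → Exp V
  | pop : V → Exp V

/-- `n`-fold relational composition of a relation. -/
def relPow {α : Type*} (r : α → α → Prop) : ℕ → α → α → Prop
  | 0 => Eq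
  | n + 1 => Relation.Comp r (relPow r n)

/-- The relational semantics of a push-pop StacKAT expression, as a binary relation on stacks. -/
def denote {V : Type} : Exp V → List V → List V → Prop
  | Exp.zero => fun _ _ => False
  | Exp.one => Eq
  | Exp.plus e f => fun s t => denote e s t ∨ denote f s t
  | Exp.seq e f => Relation.Comp (denote e) (denote f)
  | Exp.star e => fun s t => ∃ n, relPow (denote e) n s t
  | Exp.push v => fun s t => t = v :: s
  | Exp.pop v => fun s t => s = v :: t

/-- The push-pop alphabet `Σ = {push v, pop v | v ∈ V}`:
`Sum.inl v` is `push v`, `Sum.inr v` is `pop v`. -/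
abbrev Alph (V : Type) : Type := V ⊕ V

/-- The letter `push v`. -/
def pushSym {V : Type} (v : V) : Alph V := Sum.inl v

/-- The letter `pop v`. -/
def popSym {V : Type} (v : V) : Alph V := Sum.inr v

/-- `pushpop(L)`: the least language containing `L` closed under the rule
"if `x · push v · pop v · y ∈ pushpop(L)` then `x · y ∈ pushpop(L)`". -/
inductive PushPop {V : Type} (L : Language (Alph V)) : List (Alph V) → Prop
  | base {x : List (Alph V)} : x ∈ L → PushPop L x
  | step {x y : List (Alph V)} {v : V} :
      PushPop L (x ++ pushSym v :: popSym v :: y) → PushPop L (x ++ y)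

/-- `pushpop(L)` as a language. -/
def pushpopCl {V : Type} (L : Language (Alph V)) : Language (Alph V) := {x | PushPop L x}

/-- `L_{pop*push*}`: words in which no pop occurs after a push, i.e. a block of pops
followed by a block of pushes. -/
def PopsThenPushes {V : Type} : Language (Alph V) :=
  {w | ∃ p q : List V, w = p.map popSym ++ q.map pushSym}

/-- `filter(L) := L ∩ L_{pop*push*}`. -/
def filterL {V : Type} (L : Language (Alph V)) : Language (Alph V) :=
  {w | w ∈ L ∧ w ∈ PopsThenPushes}

/-- `poppush(L)`: the least language containing `L` closed under the rule
"if `x · y ∈ poppush(L)` with `x` all pops and `y` all pushes, then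
`x · pop v · push v · y ∈ poppush(L)` for every `v`". -/
inductive PopPush {V : Type} (L : Language (Alph V)) : List (Alph V) → Prop
  | base {x : List (Alph V)} : x ∈ L → PopPush L x
  | step {p q : List V} {v : V} :
      PopPush L (p.map popSym ++ q.map pushSym) →
      PopPush L (p.map popSym ++ popSym v :: pushSym v :: q.map pushSym)

/-- `poppush(L)` as a language. -/
def poppushCl {V : Type} (L : Language (Alph V)) : Language (Alph V) := {x | PopPush L x}

/-- The zipped alphabet: pairs whose first component is a pop symbol or `done` (`none`)
and whose second component is a push symbol or `done` (`none`). -/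
abbrev ZAlph (V : Type) : Type := Option V × Option V

/-- Zip together a list of pop values (innermost, i.e. last, pop first) with a list of
push values (first push first), padding with `done` (`none`). -/
def zipAux {V : Type} : List V → List V → List (ZAlph V)
  | [], [] => []
  | v :: p, [] => (some v, none) :: zipAux p []
  | [], w :: q => (none, some w) :: zipAux [] q
  | v :: p, w :: q => (some v, some w) :: zipAux p q

/-- Read off the maximal prefix of pop letters, returning the popped values in order
together with the remaining suffix. -/
def takePops {V : Type} : List (Alph V) → List V × List (Alph V)
  | Sum.inr v :: r => ((takePops r).1.cons v, (takePops r).2)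
  | w => ([], w)

/-- If the word consists only of push letters, return their values in order; else `none`. -/
def asPushes {V : Type} : List (Alph V) → Option (List V)
  | [] => some []
  | Sum.inl v :: r => (asPushes r).map (v :: ·)
  | Sum.inr _ :: _ => none

/-- `zip`: the partial function on `Σ*` defined only on words of the form pops-then-pushes,
pairing the last pop with the first push, and so on outwards, padding with `done`. -/
def zipWord {V : Type} (w : List (Alph V)) : Option (List (ZAlph V)) :=
  (asPushes (takePops w).2).map fun q => zipAux (takePops w).1.reverse q

/-- `zip(L) := { zip(x) | x ∈ L, zip(x) defined }`. -/
def zipLang {V : Type} (L : Language (Alph V)) : Language (ZAlph V) :=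
  {z | ∃ w ∈ L, zipWord w = some z}

/-- The regular language `L(e) ⊆ Σ*` of a push-pop expression viewed as a regular
expression over the push-pop alphabet. -/
def lang {V : Type} : Exp V → Language (Alph V)
  | Exp.zero => 0
  | Exp.one => 1
  | Exp.plus e f => lang e + lang f
  | Exp.seq e f => lang e * lang f
  | Exp.star e => KStar.kstar (lang e)
  | Exp.push v => {[pushSym v]}
  | Exp.pop v => {[popSym v]}

/-- The relation on stacks denoted by a single letter. -/
def letterRel {V : Type} : Alph V → List V → List V → Prop
  | Sum.inl v => fun s t => t = v :: s
  | Sum.inr v => fun s t => s = v :: t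

/-- The relation on stacks denoted by a word `x ∈ Σ*`: the composition of the letter
relations (`⟦ε⟧` is the identity). -/
def wordRel {V : Type} : List (Alph V) → List V → List V → Prop
  | [] => Eq
  | a :: x => Relation.Comp (letterRel a) (wordRel x)

/-- `[L] := ⋃_{x ∈ L} ⟦x⟧`: the relational interpretation of a language. -/
def langRel {V : Type} (L : Language (Alph V)) : List V → List V → Prop :=
  fun s t => ∃ x ∈ L, wordRel x s t

/-- `overline(L) := poppush(filter(pushpop(L)))`. -/
def overlineL {V : Type} (L : Language (Alph V)) : Language (Alph V) :=
  poppushCl (filterL (pushpopCl L))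

/-- The word `pop s₁ ⋯ pop sₙ` for a stack `s = s₁::…::sₙ`. -/
def popWord {V : Type} (s : List V) : List (Alph V) := s.map popSym

/-- The word `push s'ₘ ⋯ push s'₁` for a stack `s' =s'₁::…::s'ₘ`. -/
def pushWord {V : Type} (s : List V) : List (Alph V) := s.reverse.map pushSym

/-- The alternative interpretation `[L]' := { (s, s') | pop(s) · push(s') ∈ L }`. -/
def langRel' {V : Type} (L : Language (Alph V)) : List V → List V → Prop :=
  fun s s' => popWord s ++ pushWord s' ∈ L

lemma wordRel_append {V : Type} (x y : List (Alph V)) (s t : List V) :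
    wordRel (x ++ y) s t ↔ ∃ u, wordRel x s u ∧ wordRel y u t := by
  induction x generalizing s with
  | nil =>
    simp only [List.nil_append, wordRel]
    constructor
    · intro h; exact ⟨s, rfl, h⟩
    · rintro ⟨u, rfl, h⟩; exact h
  | cons a x ih =>
    simp only [List.cons_append, wordRel, Relation.Comp]
    constructor
    · rintro ⟨u, ha, hw⟩
      obtain ⟨w, h1, h2⟩ := (ih u).mp hw
      exact ⟨w, ⟨u, ha, h1⟩, h2⟩
    · rintro ⟨w, ⟨u, ha, h1⟩, h2⟩
      exact ⟨u, ha, (ih u).mpr ⟨w, h1, h2⟩⟩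

lemma wordRel_pops {V : Type} (p : List V) (s t : List V) :
    wordRel (p.map popSym) s t ↔ s = p ++ t := by
  induction p generalizing s with
  | nil => simp [wordRel, eq_comm]
  | cons v p ih =>
    simp only [List.map_cons, wordRel, Relation.Comp, letterRel, popSym, ih, List.cons_append]
    constructor
    · rintro ⟨u, rfl, rfl⟩; rfl
    · rintro rfl; exact ⟨p ++ t, rfl, rfl⟩

lemma wordRel_pushes {V : Type} (q : List V) (s t : List V) :
    wordRel (q.map pushSym) s t ↔ t = q.reverse ++ s := by
  induction q generalizing s with
  | nil => simp [wordRel, eq_comm]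
  | cons v q ih =>
    simp only [List.map_cons, wordRel, Relation.Comp, letterRel, pushSym, ih, List.reverse_cons]
    constructor
    · rintro ⟨u, rfl, rfl⟩; simp
    · rintro rfl; exact ⟨v :: s, rfl, by simp⟩

lemma poppush_insert {V : Type} {M : Language (Alph V)} (u : List V) {p q : List V}
    (h : PopPush M (p.map popSym ++ q.map pushSym)) :
    PopPush M (p.map popSym ++ u.map popSym ++ u.reverse.map pushSym ++ q.map pushSym) := by
  induction u generalizing p q with
  | nil => simpa using h
  | cons v u ih =>
    have h' : PopPush M ((p ++ [v]).map popSym ++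
        u.map popSym ++ u.reverse.map pushSym ++ (v :: q).map pushSym) :=
      ih (p := p ++ [v]) (q := v :: q) (by
        have := PopPush.step (v := v) h
        simpa using this)
    simpa [List.append_assoc] using h'

lemma overline_shape {V : Type} {L : Language (Alph V)} {x : List (Alph V)}
    (h : x ∈ overlineL L) : ∃ p q : List V, x = p.map popSym ++ q.map pushSym := by
  induction h with
  | base hx => exact hx.2
  | @step p q v _ _ => exact ⟨p ++ [v], v :: q, by simp⟩

/-- `[overline(L)] = [overline(L)]'`: the two semantic interpretations agree on the
canonicalized language. -/
theorem stmt11 {V : Type} [Fintype V] [Nonempty V] (L : Language (Alph V)) :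
    langRel (overlineL L) = langRel' (overlineL L) := by
  funext s t
  apply propext
  constructor
  · rintro ⟨x, hx, hw⟩
    obtain ⟨p, q, rfl⟩ := overline_shape hx
    rw [wordRel_append] at hw
    obtain ⟨u, h1, h2⟩ := hw
    rw [wordRel_pops] at h1
    rw [wordRel_pushes] at h2
    subst h1; subst h2
    have key := poppush_insert u hx
    show (p ++ u).map popSym ++ ((q.reverse ++ u).reverse).map pushSym ∈ overlineL L
    simp [List.append_assoc] at key ⊢
    exact key
  · intro h
    refine ⟨popWord s ++ pushWord t, h, ?_⟩
    rw [wordRel_append]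
    exact ⟨[], (wordRel_pops s s []).mpr (by simp),
      (wordRel_pushes t.reverse [] t).mpr (by simp)⟩
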